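/- Let H ⊆ G be algebra groups over F_q and let χ be a superclass function of H. Then for every g ∈ G, SInd_H^G(χ)(g) = (1/|G|) Σ_{x∈G} Ind_H^G(χ)(x(g−1)+1). -/

import Mathlib

/-!
STATEMENT 2: Let H ⊆ G be algebra groups over F_q and let χ be a superclass function
of H.  Then for every g ∈ G,
  SInd_H^G(χ)(g) = (1/|G|) Σ_{x∈G} Ind_H^G(χ)(x(g−1)+1).
-/

open scoped Classical

noncomputable section

def setFinset {α : Type*} [Fintype α] (S : Set α) : Finset α :=
  Finset.univ.filter (· ∈ S)

/-- The algebra group `1 + J` attached to a nilpotent algebra `J`. -/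
def algebraGroup {A : Type*} [Ring A] (J : Set A) : Set A :=
  (fun a => 1 + a) '' J

/-- `χ` is constant on the superclasses of `G`: `u ~ v` iff `v − 1 ∈ G(u−1)G`. -/
def IsSuperclassFn {A : Type*} [Ring A] (G : Set A) (χ : A → ℂ) : Prop :=
  ∀ u ∈ G, ∀ v ∈ G, (∃ x ∈ G, ∃ y ∈ G, v - 1 = x * (u - 1) * y) → χ u = χ v

/-- Superinduction `SInd_H^G(χ)(g) = (1/(|G||H|)) Σ_{x,y∈G} χ̇(x(g−1)y + 1)`. -/
def SInd {A : Type*} [Ring A] [Fintype A] (G H : Set A) (χ : A → ℂ) (g : A) : ℂ :=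
  (((setFinset G).card : ℂ) * ((setFinset H).card : ℂ))⁻¹ *
    ∑ x ∈ setFinset G, ∑ y ∈ setFinset G,
      if x * (g - 1) * y + 1 ∈ H then χ (x * (g - 1) * y + 1) else 0

/-- Induction `Ind_H^G(χ)(g) = (1/|H|) Σ_{y∈G} χ̇(y⁻¹ g y)`. -/
def Ind {A : Type*} [Ring A] [Fintype A] (G H : Set A) (χ : A → ℂ) (g : A) : ℂ :=
  ((setFinset H).card : ℂ)⁻¹ *
    ∑ y ∈ setFinset G,
      if Ring.inverse y * g * y ∈ H then χ (Ring.inverse y * g * y) else 0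

section helpers

variable {F : Type*} [Field F] {A : Type*} [Ring A] [Algebra F A]

lemma mem_setFinset {α : Type*} [Fintype α] {S : Set α} {a : α} :
    a ∈ setFinset S ↔ a ∈ S := by simp [setFinset]

lemma mem_algebraGroup_iff {J : NonUnitalSubalgebra F A} {a : A} :
    a ∈ algebraGroup (J : Set A) ↔ a - 1 ∈ J := by
  constructor
  · rintro ⟨b, hb, rfl⟩; simpa using hb
  · intro h; exact ⟨a - 1, h, by noncomm_ring⟩

lemma mul_mem_algebraGroup {J : NonUnitalSubalgebra F A} {u v : A}
    (hu : u ∈ algebraGroup (J : Set A)) (hv : v ∈ algebraGroup (J : Set A)) :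
    u * v ∈ algebraGroup (J : Set A) := by
  rw [mem_algebraGroup_iff] at hu hv ⊢
  have h : u * v - 1 = (u - 1) * (v - 1) + (u - 1) + (v - 1) := by noncomm_ring
  rw [h]
  exact add_mem (add_mem (mul_mem hu hv) hu) hv

lemma neg_pow_succ_mem {J : NonUnitalSubalgebra F A} {a : A} (ha : a ∈ J) :
    ∀ i : ℕ, (-a) ^ (i + 1) ∈ J := by
  intro i
  induction i with
  | zero => simpa using neg_mem ha
  | succ n ih =>
      rw [pow_succ]
      exact mul_mem ih (neg_mem ha)

lemma exists_inverse {J : NonUnitalSubalgebra F A}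
    (hnil : ∃ k : ℕ, ∀ l : List A, (∀ x ∈ l, x ∈ J) → k ≤ l.length → l.prod = 0)
    {u : A} (hu : u ∈ algebraGroup (J : Set A)) :
    ∃ v ∈ algebraGroup (J : Set A), u * v = 1 ∧ v * u = 1 := by
  obtain ⟨k, hk⟩ := hnil
  rw [mem_algebraGroup_iff] at hu
  set a : A := u - 1 with ha
  have hu1 : u = a + 1 := by rw [ha]; noncomm_ring
  have hpow : a ^ (k + 1) = 0 := by
    have := hk (List.replicate (k + 1) a)
      (by intro x hx; rw [List.eq_of_mem_replicate hx]; exact hu) (by simp)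
    simpa [List.prod_replicate] using this
  have hx : (-a) ^ (k + 2) = 0 := by
    rw [neg_pow]
    have : a ^ (k + 2) = a ^ (k + 1) * a := by rw [pow_succ]
    rw [this, hpow, zero_mul, mul_zero]
  set s : A := ∑ i ∈ Finset.range (k + 2), (-a) ^ i with hs
  have hgs : s * (-a - 1) = -1 := by
    have := geom_sum_mul (-a) (k + 2)
    rw [hx] at this
    simpa using this
  have hgs' : (-a - 1) * s = -1 := by
    have := mul_geom_sum (-a) (k + 2)
    rw [hx] at this
    simpa using this
  have h1 : u * s = 1 := by
    have : u * s = -((-a - 1) * s) := by rw [hu1]; noncomm_ring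
    rw [this, hgs', neg_neg]
  have h2 : s * u = 1 := by
    have : s * u = -(s * (-a - 1)) := by rw [hu1]; noncomm_ring
    rw [this, hgs, neg_neg]
  refine ⟨s, ?_, h1, h2⟩
  rw [mem_algebraGroup_iff]
  have : s = (∑ i ∈ Finset.range (k + 1), (-a) ^ (i + 1)) + (-a) ^ 0 :=
    Finset.sum_range_succ' _ _
  rw [this]
  simp only [pow_zero, add_sub_cancel_right]
  exact sum_mem fun i _ => neg_pow_succ_mem hu i

lemma ringInverse_eq {u v : A} (h1 : u * v = 1) (h2 : v * u = 1) :
    Ring.inverse u = v :=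
  Ring.inverse_unit ⟨u, v, h1, h2⟩

end helpers

theorem sind_eq_average_of_ind
    (F : Type*) [Field F] [Fintype F]
    (A : Type*) [Ring A] [Algebra F A] [Fintype A]
    (J J' : NonUnitalSubalgebra F A)
    (hnil : ∃ k : ℕ, ∀ l : List A, (∀ x ∈ l, x ∈ J) → k ≤ l.length → l.prod = 0)
    (hsub : (J' : Set A) ⊆ (J : Set A))
    (χ : A → ℂ) (hχ : IsSuperclassFn (algebraGroup (J' : Set A)) χ) :
    ∀ g ∈ algebraGroup (J : Set A),
      SInd (algebraGroup (J : Set A)) (algebraGroup (J' : Set A)) χ g =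
        ((setFinset (algebraGroup (J : Set A))).card : ℂ)⁻¹ *
          ∑ x ∈ setFinset (algebraGroup (J : Set A)),
            Ind (algebraGroup (J : Set A)) (algebraGroup (J' : Set A)) χ (x * (g - 1) + 1) := by
  intro g hg
  unfold SInd Ind
  rw [← Finset.mul_sum, mul_inv, mul_assoc]
  congr 1
  congr 1
  rw [Finset.sum_comm]
  conv_rhs => rw [Finset.sum_comm]
  refine Finset.sum_congr rfl fun y hy => ?_
  rw [mem_setFinset] at hy
  obtain ⟨v, hvG, huv, hvu⟩ := exists_inverse hnil hy
  have hRy : Ring.inverse y = v := ringInverse_eq huv hvu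
  refine Finset.sum_nbij' (i := fun x => y * x) (j := fun x => v * x) ?_ ?_ ?_ ?_ ?_
  · intro x hx
    rw [mem_setFinset] at hx ⊢
    exact mul_mem_algebraGroup hy hx
  · intro x hx
    rw [mem_setFinset] at hx ⊢
    exact mul_mem_algebraGroup hvG hx
  · intro x _
    rw [← mul_assoc, hvu, one_mul]
  · intro x _
    rw [← mul_assoc, huv, one_mul]
  · intro x _
    have key : Ring.inverse y * (y * x * (g - 1) + 1) * y = x * (g - 1) * y + 1 := by
      rw [hRy]
      have h1 : v * (y * x * (g - 1) + 1) * y = (v * y) * (x * (g - 1) * y) + v * y := by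
        noncomm_ring
      rw [h1, hvu, one_mul]
    rw [key]
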